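/- arXiv:2303.05494 — 4 statements merged into one kernel-verified Lean document; each statement's English description precedes it below -/
import Mathlib

section
/- For every ℏ > 0 and all Schwartz functions f, g, h : ℝ² → ℂ, the Moyal product is associative: (f ⋆_ℏ g) ⋆_ℏ h = f ⋆_ℏ (g ⋆_ℏ h) (in particular all the integrals involved converge absolutely). -/
open MeasureTheory Complex Filter

/-- The Moyal kernel at base point `m`, evaluated on `x = (p'',q'')`, `y = (p',q')`:
`exp((i/(2ℏ))·[(p''−p)(q−q') − (q''−q)(p−p')])`. -/
noncomputable def moyalKernel (ℏ : ℝ) (m x y : ℝ × ℝ) : ℂ :=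
  Complex.exp (Complex.I / (2 * ℏ) *
    (((x.1 - m.1) * (m.2 - y.2) - (x.2 - m.2) * (m.1 - y.1) : ℝ) : ℂ))

/-- The Moyal product `(f ⋆_ℏ g)(p,q) = (4πℏ)⁻² ∫_{ℝ⁴} f(p'',q'') g(p',q') ·
exp((i/(2ℏ))·[(p''−p)(q−q') − (q''−q)(p−p')]) dp'' dq'' dp' dq'`. -/
noncomputable def moyal (ℏ : ℝ) (f g : ℝ × ℝ → ℂ) : ℝ × ℝ → ℂ :=
  fun m => ((4 * Real.pi * ℏ) ^ 2 : ℝ)⁻¹ •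
    ∫ xy : (ℝ × ℝ) × (ℝ × ℝ), f xy.1 * g xy.2 * moyalKernel ℏ m xy.1 xy.2

open SchwartzMap
open scoped FourierTransform RealInnerProductSpace

set_option linter.unnecessarySeqFocus false

noncomputable section
namespace MoyalAux

abbrev E2 : Type := EuclideanSpace ℝ (Fin 2)

def ip (x y : ℝ × ℝ) : ℝ := x.1 * y.1 + x.2 * y.2

def ft (ψ : ℝ × ℝ → ℂ) (ξ : ℝ × ℝ) : ℂ :=
  ∫ y : ℝ × ℝ, ψ y * Complex.exp (Complex.I * (ip y ξ : ℝ))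

def ρ : E2 ≃ᵐ ℝ × ℝ :=
  (MeasurableEquiv.toLp 2 (Fin 2 → ℝ)).symm.trans (MeasurableEquiv.piFinTwo fun _ => ℝ)

lemma hρ : MeasurePreserving ρ :=
  (volume_preserving_piFinTwo _).comp (EuclideanSpace.volume_preserving_symm_measurableEquiv_toLp _)

def e2equiv : E2 ≃L[ℝ] ℝ × ℝ :=
  ((WithLp.linearEquiv 2 ℝ (Fin 2 → ℝ)).trans (LinearEquiv.finTwoArrow ℝ ℝ)).toContinuousLinearEquiv

lemma moyalKernel_eq (ℏ : ℝ) (m x y : ℝ × ℝ) : moyalKernel ℏ m x y =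
    Complex.exp (((((x.1 - m.1) * (m.2 - y.2) - (x.2 - m.2) * (m.1 - y.1)) / (2*ℏ) : ℝ)) * Complex.I) := by
  unfold moyalKernel; congr 1; push_cast; ring

lemma norm_moyalKernel (ℏ : ℝ) (m x y : ℝ × ℝ) : ‖moyalKernel ℏ m x y‖ = 1 := by
  rw [moyalKernel_eq]
  exact Complex.norm_exp_ofReal_mul_I _

lemma continuous_moyalKernel (ℏ : ℝ) (m : ℝ × ℝ) :
    Continuous (fun xy : (ℝ × ℝ) × (ℝ × ℝ) => moyalKernel ℏ m xy.1 xy.2) := by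
  unfold moyalKernel; fun_prop


lemma norm_ft_le (ψ : ℝ × ℝ → ℂ) (ξ : ℝ × ℝ) : ‖ft ψ ξ‖ ≤ ∫ y, ‖ψ y‖ := by
  refine (norm_integral_le_integral_norm _).trans_eq ?_
  congr 1; ext y
  rw [norm_mul, Complex.norm_exp]
  simp [mul_comm]

lemma continuous_ft {ψ : ℝ × ℝ → ℂ} (hψ : Integrable ψ) : Continuous (ft ψ) := by
  apply continuous_of_dominated (bound := fun y => ‖ψ y‖)
  · intro ξ
    exact (hψ.1.mul ((Complex.continuous_exp.comp (by unfold ip; fun_prop)).aestronglyMeasurable))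
  · intro ξ
    filter_upwards with y
    rw [norm_mul, Complex.norm_exp]
    simp [mul_comm]
  · exact hψ.norm
  · filter_upwards with y
    exact Continuous.mul continuous_const (by unfold ip; fun_prop)


lemma ft_eq (ψ : ℝ × ℝ → ℂ) (ξ : ℝ × ℝ) :
    ft ψ ξ = 𝓕 (fun v : E2 => ψ (ρ v)) (-(2 * Real.pi)⁻¹ • ρ.symm ξ) := by
  rw [Real.fourier_eq', ft,
    ← MeasurePreserving.integral_comp' hρ (fun y => ψ y * Complex.exp (Complex.I * (ip y ξ : ℝ)))]
  congr 1; ext v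
  rw [smul_eq_mul, mul_comm]
  congr 2
  have h1 : ⟪v, -(2 * Real.pi)⁻¹ • ρ.symm ξ⟫ = -(2 * Real.pi)⁻¹ * ⟪v, ρ.symm ξ⟫ :=
    real_inner_smul_right _ _ _
  have h2 : ⟪v, ρ.symm ξ⟫ = ip (ρ v) ξ := by
    simp [PiLp.inner_apply, RCLike.inner_apply, Fin.sum_univ_two, ip]
    exact congrArg₂ (· + ·) (mul_comm _ _) (mul_comm _ _)
  have hπ : (2 * Real.pi) ≠ 0 := by positivity
  have h3 : (-2 * Real.pi * ⟪v, -(2 * Real.pi)⁻¹ • ρ.symm ξ⟫ : ℝ) = ip (ρ v) ξ := by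
    rw [h1, h2]; field_simp
  rw [h3, mul_comm]

lemma ft_integrable (f : SchwartzMap (ℝ × ℝ) ℂ) : Integrable (ft ⇑f) := by
  have hc : (-(2 * Real.pi)⁻¹ : ℝ) ≠ 0 := by
    simp [Real.pi_ne_zero]
  set fE : SchwartzMap E2 ℂ := SchwartzMap.compCLMOfContinuousLinearEquiv ℝ e2equiv f with hfE
  have hcoe : ∀ v : E2, fE v = f (ρ v) := fun v => by
    simp [hfE]; rfl
  have h1 : Integrable (⇑(SchwartzMap.fourierTransformCLM ℂ fE)) := SchwartzMap.integrable _
  have h1' : Integrable (𝓕 ⇑fE) := by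
    rwa [SchwartzMap.fourierTransformCLM_apply] at h1
  have h2 : Integrable (fun u : E2 => 𝓕 (⇑fE) ((-(2 * Real.pi)⁻¹ : ℝ) • u)) :=
    (integrable_comp_smul_iff volume (𝓕 ⇑fE) hc).2 h1'
  have h3 : Integrable ((fun u : E2 => 𝓕 (⇑fE) ((-(2 * Real.pi)⁻¹ : ℝ) • u)) ∘ ⇑ρ.symm) :=
    ((MeasurePreserving.symm ρ hρ).integrable_comp_emb ρ.symm.measurableEmbedding).2 h2
  have : ft ⇑f = (fun u : E2 => 𝓕 (⇑fE) ((-(2 * Real.pi)⁻¹ : ℝ) • u)) ∘ ⇑ρ.symm := by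
    funext ξ
    rw [ft_eq]
    simp only [Function.comp_apply]
    have : (fun v : E2 => f (ρ v)) = ⇑fE := by
      funext v; exact (hcoe v).symm
    rw [this]
  rwa [this]

def T2 : (ℝ × ℝ) ≃ᵐ (ℝ × ℝ) :=
  (MeasurableEquiv.prodComm).trans ((Homeomorph.neg ℝ).toMeasurableEquiv.prodCongr (MeasurableEquiv.refl ℝ))

lemma hT2 : MeasurePreserving T2 (volume : Measure (ℝ × ℝ)) volume := by
  have h : ⇑T2 = (Prod.map (fun x : ℝ => -x) (id : ℝ → ℝ)) ∘ Prod.swap := rfl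
  rw [h]
  exact ((Measure.measurePreserving_neg volume).prod (MeasurePreserving.id volume)).comp
    Measure.measurePreserving_swap

lemma integrable_kernel_mul (ℏ : ℝ) {φ ψ : ℝ × ℝ → ℂ} (hφ : Integrable φ) (hψ : Integrable ψ)
    (m : ℝ × ℝ) :
    Integrable (fun xy : (ℝ × ℝ) × (ℝ × ℝ) => φ xy.1 * ψ xy.2 * moyalKernel ℏ m xy.1 xy.2) := by
  have h1 : Integrable (fun z : (ℝ × ℝ) × (ℝ × ℝ) => φ z.1 * ψ z.2) := hφ.mul_prod hψ
  have h2 : Integrable (fun z : (ℝ × ℝ) × (ℝ × ℝ) => ‖φ z.1‖ * ‖ψ z.2‖) :=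
    hφ.norm.mul_prod hψ.norm
  refine h2.mono' (h1.1.mul (continuous_moyalKernel ℏ m).aestronglyMeasurable) ?_
  filter_upwards with z
  rw [norm_mul, norm_moyalKernel, mul_one, norm_mul]

lemma repA (ℏ : ℝ) (hℏ : 0 < ℏ) {φ ψ : ℝ × ℝ → ℂ} (hφ : Integrable φ) (hψ : Integrable ψ)
    (m : ℝ × ℝ) :
    moyal ℏ φ ψ m = (((2 * Real.pi) ^ 2 : ℝ))⁻¹ • ∫ ξ : ℝ × ℝ,
      φ (m + (2 * ℏ) • (-ξ.2, ξ.1)) * ft ψ ξ * Complex.exp (-(Complex.I * (ip m ξ : ℝ))) := by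
  have h2ℏ : (2 * ℏ) ≠ 0 := by positivity
  have hint := integrable_kernel_mul ℏ hφ hψ m
  -- Fubini
  have step1 : moyal ℏ φ ψ m = ((4 * Real.pi * ℏ) ^ 2 : ℝ)⁻¹ •
      ∫ x : ℝ × ℝ, ∫ y : ℝ × ℝ, φ x * ψ y * moyalKernel ℏ m x y := by
    rw [moyal]
    congr 1
    exact MeasureTheory.integral_prod _ hint
  -- inner integral
  have inner : ∀ x : ℝ × ℝ, (∫ y : ℝ × ℝ, φ x * ψ y * moyalKernel ℏ m x y)
      = φ x * Complex.exp (Complex.I * (((x.1 * m.2 - x.2 * m.1)/(2*ℏ) : ℝ))) *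
        ft ψ ((x.2 - m.2)/(2*ℏ), -(x.1 - m.1)/(2*ℏ)) := by
    intro x
    set w : ℝ × ℝ := ((x.2 - m.2)/(2*ℏ), -(x.1 - m.1)/(2*ℏ)) with hw
    set c₁ : ℝ := (x.1 * m.2 - x.2 * m.1)/(2*ℏ) with hc₁
    have key : ∀ y : ℝ × ℝ, φ x * ψ y * moyalKernel ℏ m x y
        = (φ x * Complex.exp (Complex.I * (c₁ : ℝ))) *
          (ψ y * Complex.exp (Complex.I * (ip y w : ℝ))) := by
      intro y
      have hr : (((x.1 - m.1) * (m.2 - y.2) - (x.2 - m.2) * (m.1 - y.1)) / (2*ℏ) : ℝ)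
          = c₁ + ip y w := by
        rw [hc₁, hw]; unfold ip; field_simp; ring
      rw [moyalKernel_eq, hr, Complex.ofReal_add, add_mul, Complex.exp_add]
      ring
    rw [show (fun y : ℝ × ℝ => φ x * ψ y * moyalKernel ℏ m x y)
        = fun y => (φ x * Complex.exp (Complex.I * (c₁ : ℝ))) *
          (ψ y * Complex.exp (Complex.I * (ip y w : ℝ))) from funext key]
    rw [MeasureTheory.integral_const_mul]
    rfl
  rw [step1]
  simp_rw [inner]
  set u : ℝ × ℝ → ℂ := fun x => φ x *
      Complex.exp (Complex.I * (((x.1 * m.2 - x.2 * m.1)/(2*ℏ) : ℝ))) *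
      ft ψ ((x.2 - m.2)/(2*ℏ), -(x.1 - m.1)/(2*ℏ)) with hu
  have cov : ∫ x, u x = (((2*ℏ)^2 : ℝ)) • ∫ ξ : ℝ × ℝ, u (m + (2*ℏ) • T2 ξ) := by
    have e1 : ∫ ξ : ℝ × ℝ, u (m + (2*ℏ) • T2 ξ) = ∫ ξ : ℝ × ℝ, u (m + (2*ℏ) • ξ) :=
      hT2.integral_comp' (fun ξ => u (m + (2*ℏ) • ξ))
    have e2 : ∫ ξ : ℝ × ℝ, u (m + (2*ℏ) • ξ) = |((2*ℏ)^2 : ℝ)⁻¹| • ∫ x, u (m + x) := by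
      have := Measure.integral_comp_smul (volume : Measure (ℝ × ℝ)) (fun x => u (m + x)) (2*ℏ)
      simpa using this
    have e3 : ∫ x : ℝ × ℝ, u (m + x) = ∫ x, u x := integral_add_left_eq_self u m
    rw [e1, e2, e3, abs_of_pos (by positivity), smul_smul, mul_inv_cancel₀ (by positivity),
      one_smul]
  rw [cov, smul_smul]
  have hcoef : ((4 * Real.pi * ℏ) ^ 2 : ℝ)⁻¹ * ((2*ℏ)^2 : ℝ) = (((2 * Real.pi) ^ 2 : ℝ))⁻¹ := by
    have hπ : Real.pi ≠ 0 := Real.pi_ne_zero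
    have : ℏ ≠ 0 := ne_of_gt hℏ
    field_simp
    ring
  rw [hcoef]
  congr 1
  apply integral_congr_ae
  filter_upwards with ξ
  have hx : m + (2*ℏ) • T2 ξ = (m.1 - 2*ℏ*ξ.2, m.2 + 2*ℏ*ξ.1) := by
    have h : T2 ξ = (-ξ.2, ξ.1) := rfl
    rw [h]
    apply Prod.ext <;> simp <;> ring
  rw [hu]
  simp only [hx]
  have hA : (((m.1 - 2*ℏ*ξ.2, m.2 + 2*ℏ*ξ.1).2 - m.2)/(2*ℏ),
      -(((m.1 - 2*ℏ*ξ.2, m.2 + 2*ℏ*ξ.1).1 - m.1))/(2*ℏ)) = ξ := by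
    apply Prod.ext <;> simp <;> field_simp
  have hB : ((((m.1 - 2*ℏ*ξ.2, m.2 + 2*ℏ*ξ.1).1 * m.2
      - (m.1 - 2*ℏ*ξ.2, m.2 + 2*ℏ*ξ.1).2 * m.1))/(2*ℏ) : ℝ) = -(ip m ξ) := by
    unfold ip; simp; field_simp; ring
  rw [hA, hB]
  have hexp : Complex.exp (Complex.I * ((-(ip m ξ) : ℝ) : ℂ))
      = Complex.exp (-(Complex.I * ((ip m ξ : ℝ) : ℂ))) := by
    push_cast; ring_nf
  rw [hexp]
  have hφarg : ((m.1 - 2*ℏ*ξ.2, m.2 + 2*ℏ*ξ.1) : ℝ × ℝ) = m + (2 * ℏ) • (-ξ.2, ξ.1) := by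
    apply Prod.ext <;> simp <;> ring
  rw [hφarg]
  ring

def S2 : (ℝ × ℝ) ≃ᵐ (ℝ × ℝ) :=
  (MeasurableEquiv.prodComm).trans ((MeasurableEquiv.refl ℝ).prodCongr (Homeomorph.neg ℝ).toMeasurableEquiv)

lemma hS2 : MeasurePreserving S2 (volume : Measure (ℝ × ℝ)) volume := by
  have h : ⇑S2 = (Prod.map (id : ℝ → ℝ) (fun x : ℝ => -x)) ∘ Prod.swap := rfl
  rw [h]
  exact ((MeasurePreserving.id volume).prod (Measure.measurePreserving_neg volume)).comp
    Measure.measurePreserving_swap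

lemma repB (ℏ : ℝ) (hℏ : 0 < ℏ) {φ ψ : ℝ × ℝ → ℂ} (hφ : Integrable φ) (hψ : Integrable ψ)
    (m : ℝ × ℝ) :
    moyal ℏ φ ψ m = (((2 * Real.pi) ^ 2 : ℝ))⁻¹ • ∫ η : ℝ × ℝ,
      ft φ η * ψ (m + (2 * ℏ) • (η.2, -η.1)) * Complex.exp (-(Complex.I * (ip m η : ℝ))) := by
  have h2ℏ : (2 * ℏ) ≠ 0 := by positivity
  have hint := integrable_kernel_mul ℏ hφ hψ m
  -- Fubini
  have step1 : moyal ℏ φ ψ m = ((4 * Real.pi * ℏ) ^ 2 : ℝ)⁻¹ •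
      ∫ y : ℝ × ℝ, ∫ x : ℝ × ℝ, φ x * ψ y * moyalKernel ℏ m x y := by
    rw [moyal]
    congr 1
    exact MeasureTheory.integral_prod_symm _ hint
  -- inner integral over x
  have inner : ∀ y : ℝ × ℝ, (∫ x : ℝ × ℝ, φ x * ψ y * moyalKernel ℏ m x y)
      = ψ y * Complex.exp (Complex.I * (((m.1 * y.2 - m.2 * y.1)/(2*ℏ) : ℝ))) *
        ft φ ((m.2 - y.2)/(2*ℏ), (y.1 - m.1)/(2*ℏ)) := by
    intro y
    set w : ℝ × ℝ := ((m.2 - y.2)/(2*ℏ), (y.1 - m.1)/(2*ℏ)) with hw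
    set c₁ : ℝ := (m.1 * y.2 - m.2 * y.1)/(2*ℏ) with hc₁
    have key : ∀ x : ℝ × ℝ, φ x * ψ y * moyalKernel ℏ m x y
        = (ψ y * Complex.exp (Complex.I * (c₁ : ℝ))) *
          (φ x * Complex.exp (Complex.I * (ip x w : ℝ))) := by
      intro x
      have hr : (((x.1 - m.1) * (m.2 - y.2) - (x.2 - m.2) * (m.1 - y.1)) / (2*ℏ) : ℝ)
          = c₁ + ip x w := by
        rw [hc₁, hw]; unfold ip; field_simp; ring
      rw [moyalKernel_eq, hr, Complex.ofReal_add, add_mul, Complex.exp_add]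
      ring
    rw [show (fun x : ℝ × ℝ => φ x * ψ y * moyalKernel ℏ m x y)
        = fun x => (ψ y * Complex.exp (Complex.I * (c₁ : ℝ))) *
          (φ x * Complex.exp (Complex.I * (ip x w : ℝ))) from funext key]
    rw [MeasureTheory.integral_const_mul]
    rfl
  rw [step1]
  simp_rw [inner]
  set u : ℝ × ℝ → ℂ := fun y => ψ y *
      Complex.exp (Complex.I * (((m.1 * y.2 - m.2 * y.1)/(2*ℏ) : ℝ))) *
      ft φ ((m.2 - y.2)/(2*ℏ), (y.1 - m.1)/(2*ℏ)) with hu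
  have cov : ∫ y, u y = (((2*ℏ)^2 : ℝ)) • ∫ η : ℝ × ℝ, u (m + (2*ℏ) • S2 η) := by
    have e1 : ∫ η : ℝ × ℝ, u (m + (2*ℏ) • S2 η) = ∫ η : ℝ × ℝ, u (m + (2*ℏ) • η) :=
      hS2.integral_comp' (fun η => u (m + (2*ℏ) • η))
    have e2 : ∫ η : ℝ × ℝ, u (m + (2*ℏ) • η) = |((2*ℏ)^2 : ℝ)⁻¹| • ∫ y, u (m + y) := by
      have := Measure.integral_comp_smul (volume : Measure (ℝ × ℝ)) (fun y => u (m + y)) (2*ℏ)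
      simpa using this
    have e3 : ∫ y : ℝ × ℝ, u (m + y) = ∫ y, u y := integral_add_left_eq_self u m
    rw [e1, e2, e3, abs_of_pos (by positivity), smul_smul, mul_inv_cancel₀ (by positivity),
      one_smul]
  rw [cov, smul_smul]
  have hcoef : ((4 * Real.pi * ℏ) ^ 2 : ℝ)⁻¹ * ((2*ℏ)^2 : ℝ) = (((2 * Real.pi) ^ 2 : ℝ))⁻¹ := by
    have hπ : Real.pi ≠ 0 := Real.pi_ne_zero
    have : ℏ ≠ 0 := ne_of_gt hℏ
    field_simp
    ring
  rw [hcoef]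
  congr 1
  apply integral_congr_ae
  filter_upwards with η
  have hx : m + (2*ℏ) • S2 η = (m.1 + 2*ℏ*η.2, m.2 - 2*ℏ*η.1) := by
    have h : S2 η = (η.2, -η.1) := rfl
    rw [h]
    apply Prod.ext <;> simp <;> ring
  rw [hu]
  simp only [hx]
  have hA : ((m.2 - (m.1 + 2*ℏ*η.2, m.2 - 2*ℏ*η.1).2)/(2*ℏ),
      (((m.1 + 2*ℏ*η.2, m.2 - 2*ℏ*η.1).1 - m.1))/(2*ℏ)) = η := by
    apply Prod.ext <;> simp <;> field_simp
  have hB : (((m.1 * (m.1 + 2*ℏ*η.2, m.2 - 2*ℏ*η.1).2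
      - m.2 * (m.1 + 2*ℏ*η.2, m.2 - 2*ℏ*η.1).1))/(2*ℏ) : ℝ) = -(ip m η) := by
    unfold ip; simp; field_simp; ring
  rw [hA, hB]
  have hexp : Complex.exp (Complex.I * ((-(ip m η) : ℝ) : ℂ))
      = Complex.exp (-(Complex.I * ((ip m η : ℝ) : ℂ))) := by
    push_cast; ring_nf
  rw [hexp]
  have hψarg : ((m.1 + 2*ℏ*η.2, m.2 - 2*ℏ*η.1) : ℝ × ℝ) = m + (2 * ℏ) • (η.2, -η.1) := by
    apply Prod.ext <;> simp <;> ring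
  rw [hψarg]
  ring

lemma norm_expi (r : ℝ) : ‖Complex.exp (-(Complex.I * (r : ℂ)))‖ = 1 := by
  rw [show -(Complex.I * (r : ℂ)) = ((-r : ℝ) : ℂ) * Complex.I by push_cast; ring]
  exact Complex.norm_exp_ofReal_mul_I _

lemma moyal_integrable (ℏ : ℝ) (hℏ : 0 < ℏ) (f g : SchwartzMap (ℝ × ℝ) ℂ)
    (hftf : Integrable (ft ⇑f)) :
    Integrable (moyal ℏ ⇑f ⇑g) := by
  set a : ℝ × ℝ → ℝ × ℝ := fun η => (2*ℏ) • ((η.2, -η.1) : ℝ × ℝ) with ha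
  set Ψ : (ℝ × ℝ) × (ℝ × ℝ) → ℂ := fun p =>
    ft ⇑f p.1 * g (p.2 + a p.1) * Complex.exp (-(Complex.I * (ip p.2 p.1 : ℝ))) with hΨ
  have hcont : Continuous Ψ := by
    refine Continuous.mul (Continuous.mul ?_ ?_) ?_
    · exact (continuous_ft f.integrable).comp continuous_fst
    · exact g.continuous.comp (by rw [ha]; fun_prop)
    · exact Complex.continuous_exp.comp (by unfold ip; fun_prop)
  have hmeas : AEStronglyMeasurable Ψ ((volume : Measure (ℝ × ℝ)).prod volume) :=
    hcont.aestronglyMeasurable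
  have hnorm : ∀ p : (ℝ × ℝ) × (ℝ × ℝ), ‖Ψ p‖ = ‖ft ⇑f p.1‖ * ‖g (p.2 + a p.1)‖ := by
    intro p
    rw [hΨ]
    simp only [norm_mul, norm_expi, mul_one]
  have hint : Integrable Ψ ((volume : Measure (ℝ × ℝ)).prod volume) := by
    refine (integrable_prod_iff hmeas).2 ⟨?_, ?_⟩
    · filter_upwards with η
      have h1 : Integrable (fun m : ℝ × ℝ => g (m + a η)) :=
        (measurePreserving_add_right volume (a η)).integrable_comp_emb
          (MeasurableEquiv.addRight (a η)).measurableEmbedding |>.2 (g.integrable (μ := volume))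
      have h2 : Integrable (fun m : ℝ × ℝ => g (m + a η) *
          Complex.exp (-(Complex.I * (ip m η : ℝ)))) := by
        refine h1.norm.mono' ?_ ?_
        · exact (g.continuous.comp (by fun_prop)).aestronglyMeasurable.mul
            (Complex.continuous_exp.comp (by unfold ip; fun_prop)).aestronglyMeasurable
        · filter_upwards with m
          rw [norm_mul, norm_expi, mul_one]
      have h3 := h2.const_mul (ft ⇑f η)
      simpa [hΨ, mul_assoc] using h3
    · have heq : (fun η => ∫ m, ‖Ψ (η, m)‖) = fun η => ‖ft ⇑f η‖ * ∫ m : ℝ × ℝ, ‖g m‖ := by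
        funext η
        simp_rw [hnorm]
        rw [MeasureTheory.integral_const_mul]
        congr 1
        exact integral_add_right_eq_self (fun m => ‖g m‖) (a η)
      rw [heq]
      exact hftf.norm.mul_const _
  have heq : moyal ℏ ⇑f ⇑g = fun m => (((2 * Real.pi) ^ 2 : ℝ))⁻¹ •
      ∫ η, Ψ (η, m) := by
    funext m
    rw [repB ℏ hℏ f.integrable g.integrable m]
  rw [heq]
  have := hint.integral_prod_right
  exact (Integrable.smul ((((2 * Real.pi) ^ 2 : ℝ))⁻¹) this : _)

lemma grand (ℏ : ℝ) (hℏ : 0 < ℏ) (f g h : SchwartzMap (ℝ × ℝ) ℂ)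
    (hfg : Integrable (moyal ℏ ⇑f ⇑g)) (hgh : Integrable (moyal ℏ ⇑g ⇑h)) (m : ℝ × ℝ) :
    moyal ℏ (moyal ℏ ⇑f ⇑g) ⇑h m = moyal ℏ ⇑f (moyal ℏ ⇑g ⇑h) m := by
  set c : ℝ := (((2 * Real.pi) ^ 2 : ℝ))⁻¹ with hc
  set Aint : (ℝ × ℝ) × (ℝ × ℝ) → ℂ := fun p =>
    ft ⇑f p.2 * g (m + (2*ℏ) • ((-p.1.2, p.1.1) : ℝ × ℝ) + (2*ℏ) • ((p.2.2, -p.2.1) : ℝ × ℝ)) *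
    ft ⇑h p.1 *
    Complex.exp (-(Complex.I *
      ((ip m p.1 + ip m p.2 + 2*ℏ*(p.1.1*p.2.2 - p.1.2*p.2.1) : ℝ) : ℂ))) with hA
  have hAcont : Continuous Aint := by
    rw [hA]
    refine (((Continuous.mul ?_ ?_).mul ?_).mul ?_)
    · exact (continuous_ft f.integrable).comp continuous_snd
    · exact g.continuous.comp (by fun_prop)
    · exact (continuous_ft h.integrable).comp continuous_fst
    · exact Complex.continuous_exp.comp (by unfold ip; fun_prop)
  have hAint : Integrable Aint := by
    set C : ℝ := SchwartzMap.seminorm ℝ 0 0 g with hC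
    have hgC : ∀ x, ‖g x‖ ≤ C := fun x => g.norm_le_seminorm ℝ x
    have hbint : Integrable (fun p : (ℝ × ℝ) × (ℝ × ℝ) => C * (‖ft ⇑h p.1‖ * ‖ft ⇑f p.2‖)) :=
      (((ft_integrable h).norm.mul_prod (ft_integrable f).norm).const_mul C)
    refine hbint.mono' hAcont.aestronglyMeasurable ?_
    filter_upwards with p
    have hn : ‖Aint p‖ = ‖ft ⇑f p.2‖ *
        ‖g (m + (2*ℏ) • ((-p.1.2, p.1.1) : ℝ × ℝ) + (2*ℏ) • ((p.2.2, -p.2.1) : ℝ × ℝ))‖ *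
        ‖ft ⇑h p.1‖ := by
      rw [hA]
      rw [norm_mul, norm_mul, norm_mul, norm_expi, mul_one]
    rw [hn, show ‖ft ⇑f p.2‖ *
        ‖g (m + (2*ℏ) • ((-p.1.2, p.1.1) : ℝ × ℝ) + (2*ℏ) • ((p.2.2, -p.2.1) : ℝ × ℝ))‖ *
        ‖ft ⇑h p.1‖ =
        ‖g (m + (2*ℏ) • ((-p.1.2, p.1.1) : ℝ × ℝ) + (2*ℏ) • ((p.2.2, -p.2.1) : ℝ × ℝ))‖ *
        (‖ft ⇑h p.1‖ * ‖ft ⇑f p.2‖) from by ring]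
    exact mul_le_mul_of_nonneg_right (hgC _) (by positivity)
  have hL : moyal ℏ (moyal ℏ ⇑f ⇑g) ⇑h m = c • c • ∫ ξ : ℝ × ℝ, ∫ η : ℝ × ℝ, Aint (ξ, η) := by
    rw [repA ℏ hℏ hfg h.integrable m]
    congr 1
    rw [← integral_smul]
    apply integral_congr_ae
    filter_upwards with ξ
    rw [repB ℏ hℏ f.integrable g.integrable (m + (2 * ℏ) • ((-ξ.2, ξ.1) : ℝ × ℝ))]
    rw [smul_mul_assoc, smul_mul_assoc]
    congr 1
    rw [← MeasureTheory.integral_mul_const, ← MeasureTheory.integral_mul_const]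
    apply integral_congr_ae
    filter_upwards with η
    have e1 : ip (m + (2*ℏ) • ((-ξ.2, ξ.1) : ℝ × ℝ)) η + ip m ξ
        = ip m ξ + ip m η + 2*ℏ*(ξ.1*η.2 - ξ.2*η.1) := by
      unfold ip; simp; ring
    have e2 : Complex.exp (-(Complex.I * ((ip (m + (2*ℏ) • ((-ξ.2, ξ.1) : ℝ × ℝ)) η : ℝ) : ℂ))) *
        Complex.exp (-(Complex.I * ((ip m ξ : ℝ) : ℂ)))
        = Complex.exp (-(Complex.I *
          ((ip m ξ + ip m η + 2*ℏ*(ξ.1*η.2 - ξ.2*η.1) : ℝ) : ℂ))) := by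
      rw [← Complex.exp_add]
      congr 1
      rw [← e1]
      push_cast
      ring
    calc ft ⇑f η * g ((m + (2*ℏ) • ((-ξ.2, ξ.1) : ℝ × ℝ)) + (2 * ℏ) • ((η.2, -η.1) : ℝ × ℝ)) *
          Complex.exp (-(Complex.I * ((ip (m + (2*ℏ) • ((-ξ.2, ξ.1) : ℝ × ℝ)) η : ℝ) : ℂ))) *
          ft ⇑h ξ * Complex.exp (-(Complex.I * ((ip m ξ : ℝ) : ℂ)))
        = ft ⇑f η * g ((m + (2*ℏ) • ((-ξ.2, ξ.1) : ℝ × ℝ)) + (2 * ℏ) • ((η.2, -η.1) : ℝ × ℝ)) *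
          ft ⇑h ξ *
          (Complex.exp (-(Complex.I *
            ((ip (m + (2*ℏ) • ((-ξ.2, ξ.1) : ℝ × ℝ)) η : ℝ) : ℂ))) *
           Complex.exp (-(Complex.I * ((ip m ξ : ℝ) : ℂ)))) := by ring
      _ = Aint (ξ, η) := by rw [e2, hA]
  have hR : moyal ℏ ⇑f (moyal ℏ ⇑g ⇑h) m = c • c • ∫ η : ℝ × ℝ, ∫ ξ : ℝ × ℝ, Aint (ξ, η) := by
    rw [repB ℏ hℏ f.integrable hgh m]
    congr 1
    rw [← integral_smul]
    apply integral_congr_ae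
    filter_upwards with η
    rw [repA ℏ hℏ g.integrable h.integrable (m + (2 * ℏ) • ((η.2, -η.1) : ℝ × ℝ))]
    rw [mul_smul_comm, smul_mul_assoc]
    congr 1
    rw [← MeasureTheory.integral_const_mul, ← MeasureTheory.integral_mul_const]
    apply integral_congr_ae
    filter_upwards with ξ
    have e1 : ip (m + (2*ℏ) • ((η.2, -η.1) : ℝ × ℝ)) ξ + ip m η
        = ip m ξ + ip m η + 2*ℏ*(ξ.1*η.2 - ξ.2*η.1) := by
      unfold ip; simp; ring
    have e2 : Complex.exp (-(Complex.I * ((ip (m + (2*ℏ) • ((η.2, -η.1) : ℝ × ℝ)) ξ : ℝ) : ℂ))) *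
        Complex.exp (-(Complex.I * ((ip m η : ℝ) : ℂ)))
        = Complex.exp (-(Complex.I *
          ((ip m ξ + ip m η + 2*ℏ*(ξ.1*η.2 - ξ.2*η.1) : ℝ) : ℂ))) := by
      rw [← Complex.exp_add]
      congr 1
      rw [← e1]
      push_cast
      ring
    have e3 : (m + (2*ℏ) • ((η.2, -η.1) : ℝ × ℝ)) + (2 * ℏ) • ((-ξ.2, ξ.1) : ℝ × ℝ)
        = m + (2 * ℏ) • ((-ξ.2, ξ.1) : ℝ × ℝ) + (2*ℏ) • ((η.2, -η.1) : ℝ × ℝ) :=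
      add_right_comm _ _ _
    calc ft ⇑f η * (g ((m + (2*ℏ) • ((η.2, -η.1) : ℝ × ℝ)) + (2 * ℏ) • ((-ξ.2, ξ.1) : ℝ × ℝ)) *
          ft ⇑h ξ *
          Complex.exp (-(Complex.I * ((ip (m + (2*ℏ) • ((η.2, -η.1) : ℝ × ℝ)) ξ : ℝ) : ℂ)))) *
          Complex.exp (-(Complex.I * ((ip m η : ℝ) : ℂ)))
        = ft ⇑f η * g ((m + (2*ℏ) • ((η.2, -η.1) : ℝ × ℝ)) + (2 * ℏ) • ((-ξ.2, ξ.1) : ℝ × ℝ)) *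
          ft ⇑h ξ *
          (Complex.exp (-(Complex.I *
            ((ip (m + (2*ℏ) • ((η.2, -η.1) : ℝ × ℝ)) ξ : ℝ) : ℂ))) *
           Complex.exp (-(Complex.I * ((ip m η : ℝ) : ℂ)))) := by ring
      _ = Aint (ξ, η) := by rw [e2, e3, hA]
  rw [hL, hR]
  congr 2
  exact MeasureTheory.integral_integral_swap hAint

end MoyalAux
end

open MoyalAux in
/-- For every `ℏ > 0` and all Schwartz functions `f, g, h : ℝ² → ℂ`, the Moyal product is
associative (and all integrals involved converge absolutely). -/
theorem moyal_assoc (ℏ : ℝ) (hℏ : 0 < ℏ) (f g h : SchwartzMap (ℝ × ℝ) ℂ) :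
    (∀ m : ℝ × ℝ, Integrable (fun xy : (ℝ × ℝ) × (ℝ × ℝ) =>
      f xy.1 * g xy.2 * moyalKernel ℏ m xy.1 xy.2)) ∧
    (∀ m : ℝ × ℝ, Integrable (fun xy : (ℝ × ℝ) × (ℝ × ℝ) =>
      g xy.1 * h xy.2 * moyalKernel ℏ m xy.1 xy.2)) ∧
    (∀ m : ℝ × ℝ, Integrable (fun xy : (ℝ × ℝ) × (ℝ × ℝ) =>
      moyal ℏ (⇑f) (⇑g) xy.1 * h xy.2 * moyalKernel ℏ m xy.1 xy.2)) ∧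
    (∀ m : ℝ × ℝ, Integrable (fun xy : (ℝ × ℝ) × (ℝ × ℝ) =>
      f xy.1 * moyal ℏ (⇑g) (⇑h) xy.2 * moyalKernel ℏ m xy.1 xy.2)) ∧
    moyal ℏ (moyal ℏ (⇑f) (⇑g)) (⇑h) = moyal ℏ (⇑f) (moyal ℏ (⇑g) (⇑h)) := by
  have hfg : Integrable (moyal ℏ (⇑f) (⇑g)) := moyal_integrable ℏ hℏ f g (ft_integrable f)
  have hgh : Integrable (moyal ℏ (⇑g) (⇑h)) := moyal_integrable ℏ hℏ g h (ft_integrable g)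
  refine ⟨fun m => integrable_kernel_mul ℏ f.integrable g.integrable m,
    fun m => integrable_kernel_mul ℏ g.integrable h.integrable m,
    fun m => integrable_kernel_mul ℏ hfg h.integrable m,
    fun m => integrable_kernel_mul ℏ f.integrable hgh m, ?_⟩
  funext m
  exact grand ℏ hℏ f g h hfg hgh m
end

section
/- For every ℏ > 0 and all Schwartz functions f, g : ℝ² → ℂ, complex conjugation is an involution for the Moyal product: the complex conjugate of f ⋆_ℏ g equals (conj g) ⋆_ℏ (conj f), where conj denotes pointwise complex conjugation. -/
open MeasureTheory Complex Filter

lemma conj_moyalKernel (ℏ : ℝ) (m x y : ℝ × ℝ) :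
    starRingEnd ℂ (moyalKernel ℏ m x y) = moyalKernel ℏ m y x := by
  unfold moyalKernel
  rw [← Complex.exp_conj]
  congr 1
  simp only [map_mul, map_div₀, Complex.conj_I, Complex.conj_ofReal, map_ofNat]
  push_cast
  ring

/-- Complex conjugation is an involution for the Moyal product:
the conjugate of `f ⋆_ℏ g` equals `(conj g) ⋆_ℏ (conj f)`. -/
theorem moyal_star_involution (ℏ : ℝ) (hℏ : 0 < ℏ) (f g : SchwartzMap (ℝ × ℝ) ℂ) :
    (fun m => starRingEnd ℂ (moyal ℏ (⇑f) (⇑g) m))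
      = moyal ℏ (fun m => starRingEnd ℂ (g m)) (fun m => starRingEnd ℂ (f m)) := by
  funext m
  simp only [moyal, Complex.real_smul, map_mul, Complex.conj_ofReal]
  congr 1
  rw [← integral_conj]
  rw [show (volume : Measure ((ℝ × ℝ) × (ℝ × ℝ))) = (volume : Measure (ℝ × ℝ)).prod volume from
    (MeasureTheory.Measure.volume_eq_prod _ _), ← MeasureTheory.integral_prod_swap]
  congr 1
  funext xy
  simp only [Prod.fst_swap, Prod.snd_swap, map_mul, conj_moyalKernel]
  ring
end

section
/- For every ℏ > 0 and all Schwartz functions f, g : ℝ² → ℂ, the trace property holds: ∫_{ℝ²} (f ⋆_ℏ g)(p,q) dp dq = ∫_{ℝ²} f(p,q) g(p,q) dp dq, both integrals being absolutely convergent. -/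
open MeasureTheory Complex Filter

open scoped FourierTransform RealInnerProductSpace

noncomputable section MoyalAux

abbrev E2 := EuclideanSpace ℝ (Fin 2)

def Lb : (ℝ × ℝ) →ₗ[ℝ] (ℝ × ℝ) →ₗ[ℝ] ℝ :=
  LinearMap.mk₂ ℝ (fun v w => v.1 * w.1 + v.2 * w.2)
    (fun m₁ m₂ n => by simp [Prod.fst_add, Prod.snd_add]; ring)
    (fun c m n => by simp [Prod.smul_fst, Prod.smul_snd]; ring)
    (fun m n₁ n₂ => by simp [Prod.fst_add, Prod.snd_add]; ring)
    (fun c m n => by simp [Prod.smul_fst, Prod.smul_snd]; ring)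

lemma Lb_apply (v w : ℝ × ℝ) : Lb v w = v.1 * w.1 + v.2 * w.2 := rfl

lemma Lb_cont : Continuous fun p : (ℝ × ℝ) × (ℝ × ℝ) => Lb p.1 p.2 := by
  simp only [Lb_apply]; fun_prop

lemma Lb_flip : Lb.flip = Lb := by
  apply LinearMap.ext; intro v; apply LinearMap.ext; intro w
  show Lb w v = Lb v w
  simp [Lb_apply]; ring

def FT (h : ℝ × ℝ → ℂ) : (ℝ × ℝ) → ℂ :=
  VectorFourier.fourierIntegral Real.fourierChar volume Lb h

def ρ : E2 ≃L[ℝ] ℝ × ℝ :=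
  (EuclideanSpace.equiv (Fin 2) ℝ).trans (ContinuousLinearEquiv.finTwoArrow ℝ ℝ)

lemma ρ_mp : MeasurePreserving (⇑ρ) volume volume := by
  have h1 := EuclideanSpace.volume_preserving_symm_measurableEquiv_toLp (Fin 2)
  have h2 := volume_preserving_finTwoArrow ℝ
  exact h2.comp h1

lemma ρ_inner (x y : E2) : Lb (ρ x) (ρ y) = ⟪x, y⟫ := by
  simp [Lb_apply, ρ, PiLp.inner_apply, RCLike.inner_apply, Fin.sum_univ_two,
    EuclideanSpace.equiv, mul_comm]

lemma ρ_emb : MeasurableEmbedding (⇑ρ) :=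
  ρ.toHomeomorph.measurableEmbedding

/-- Composition of a Schwartz function on ℝ × ℝ with ρ. -/
def toE2 (f : SchwartzMap (ℝ × ℝ) ℂ) : SchwartzMap E2 ℂ :=
  SchwartzMap.compCLMOfContinuousLinearEquiv ℝ ρ f

lemma toE2_apply (f : SchwartzMap (ℝ × ℝ) ℂ) (x : E2) : toE2 f x = f (ρ x) := rfl

lemma FT_eq_fourierIntegral (f : SchwartzMap (ℝ × ℝ) ℂ) (ξ : E2) :
    FT (⇑f) (ρ ξ) = 𝓕 (⇑(toE2 f)) ξ := by
  rw [FT, VectorFourier.fourierIntegral, Real.fourier_eq]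
  rw [← ρ_mp.integral_comp ρ_emb]
  congr 1 with x
  rw [ρ_inner]
  rfl

lemma FT_eq (f : SchwartzMap (ℝ × ℝ) ℂ) :
    FT (⇑f) = fun w => 𝓕 (⇑(toE2 f)) (ρ.symm w) := by
  ext w
  rw [← FT_eq_fourierIntegral]
  simp

lemma FT_integrable (f : SchwartzMap (ℝ × ℝ) ℂ) : Integrable (FT (⇑f)) volume := by
  rw [FT_eq]
  have h : Integrable (⇑(SchwartzMap.fourierTransformCLM ℝ (toE2 f))) volume :=
    (SchwartzMap.fourierTransformCLM ℝ (toE2 f)).integrable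
  have hmp : MeasurePreserving (⇑ρ.symm) volume volume :=
    ρ_mp.symm ρ.toHomeomorph.toMeasurableEquiv
  have := (hmp.integrable_comp h.aestronglyMeasurable).2 h
  exact this

lemma FT_continuous (f : SchwartzMap (ℝ × ℝ) ℂ) : Continuous (FT (⇑f)) := by
  rw [FT_eq]
  exact (SchwartzMap.fourierTransformCLM ℝ (toE2 f)).continuous.comp ρ.symm.continuous

lemma innerℓ_flip : (innerₗ E2).flip = innerₗ E2 := by
  apply LinearMap.ext; intro v; apply LinearMap.ext; intro w
  show ⟪w, v⟫ = ⟪v, w⟫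
  rw [real_inner_comm]

/-- The key Plancherel-type identity. -/
lemma key (f g : SchwartzMap (ℝ × ℝ) ℂ) :
    (∫ w : ℝ × ℝ, FT (⇑f) (-w) * FT (⇑g) w) = ∫ x : ℝ × ℝ, f x * g x := by
  have hF : ∀ h : SchwartzMap (ℝ × ℝ) ℂ, ∀ ξ : E2, FT (⇑h) (ρ ξ) = 𝓕 (⇑(toE2 h)) ξ :=
    FT_eq_fourierIntegral
  -- transfer to E2
  rw [← ρ_mp.integral_comp ρ_emb, ← ρ_mp.integral_comp ρ_emb (fun x => f x * g x)]
  have e1 : ∀ ξ : E2, FT (⇑f) (-ρ ξ) * FT (⇑g) (ρ ξ)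
      = 𝓕 (⇑(toE2 f)) (-ξ) * 𝓕 (⇑(toE2 g)) ξ := by
    intro ξ
    rw [← map_neg ρ, hF f, hF g]
  simp only [e1]
  -- change of variables ξ ↦ -ξ
  set F := toE2 f
  set G := toE2 g
  have hneg : (∫ ξ : E2, 𝓕 (⇑F) (-ξ) * 𝓕 (⇑G) ξ) = ∫ ξ : E2, 𝓕 (⇑F) ξ * 𝓕 (⇑G) (-ξ) := by
    have := integral_neg_eq_self (fun ξ : E2 => 𝓕 (⇑F) ξ * 𝓕 (⇑G) (-ξ)) (volume : Measure E2)
    simpa [neg_neg] using this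
  rw [hneg]
  set G' : SchwartzMap E2 ℂ := (SchwartzMap.fourierTransformCLE ℝ (SchwartzMap E2 ℂ)).symm G with hG'
  have hG'coe : ⇑G' = 𝓕⁻ ⇑G := by
    rw [hG']; exact SchwartzMap.fourierInv_coe G
  have hG'f : 𝓕 ⇑G' = ⇑G := by
    have : (SchwartzMap.fourierTransformCLE ℝ (SchwartzMap E2 ℂ)) G' = G := by
      rw [hG']; exact (SchwartzMap.fourierTransformCLE ℝ (SchwartzMap E2 ℂ)).apply_symm_apply G
    calc 𝓕 ⇑G' = ⇑((SchwartzMap.fourierTransformCLE ℝ (SchwartzMap E2 ℂ)) G') := rfl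
    _ = ⇑G := by rw [this]
  have e2 : ∀ ξ : E2, 𝓕 (⇑F) ξ * 𝓕 (⇑G) (-ξ) = 𝓕 (⇑F) ξ • G' ξ := by
    intro ξ
    rw [hG'coe, Real.fourierInv_eq_fourier_neg]
    rfl
  simp only [e2]
  have flip := VectorFourier.integral_fourierIntegral_smul_eq_flip
    (e := Real.fourierChar) (L := innerₗ E2) (μ := (volume : Measure E2))
    (ν := (volume : Measure E2)) (f := ⇑F) (g := ⇑G')
    Real.continuous_fourierChar (by exact continuous_inner) F.integrable G'.integrable
  rw [innerℓ_flip] at flip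
  calc (∫ ξ : E2, 𝓕 (⇑F) ξ • G' ξ) = ∫ x : E2, F x • (𝓕 ⇑G') x := flip
  _ = ∫ x : E2, F x * G x := by simp only [hG'f, smul_eq_mul]
  _ = ∫ x : E2, f (ρ x) * g (ρ x) := rfl

variable {ℏ : ℝ}

lemma charC_cont : Continuous (fun r : ℝ => (Real.fourierChar r : ℂ)) :=
  continuous_subtype_val.comp Real.continuous_fourierChar

lemma charC_norm (r : ℝ) : ‖(Real.fourierChar r : ℂ)‖ = 1 := by
  exact Circle.norm_coe _

/-- the rescaled symplectic rotation -/
def Wmap (ℏ : ℝ) (u : ℝ × ℝ) : ℝ × ℝ := (-u.2 / (4 * Real.pi * ℏ), u.1 / (4 * Real.pi * ℏ))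

def Lmap (ℏ : ℝ) (w : ℝ × ℝ) : ℝ × ℝ := (4 * Real.pi * ℏ * w.2, -(4 * Real.pi * ℏ * w.1))

lemma Wmap_Lmap (hℏ : 0 < ℏ) (w : ℝ × ℝ) : Wmap ℏ (Lmap ℏ w) = w := by
  have ha : (4 * Real.pi * ℏ) ≠ 0 := by positivity
  simp only [Wmap, Lmap]
  ext <;> field_simp

lemma Lb_Lmap (w : ℝ × ℝ) : Lb (Lmap ℏ w) w = 0 := by
  simp only [Lb_apply, Lmap]; ring

lemma Lmap_cont : Continuous (Lmap ℏ) := by unfold Lmap; fun_prop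

lemma kernel_norm (m x y : ℝ × ℝ) : ‖moyalKernel ℏ m x y‖ = 1 := by
  rw [moyalKernel]
  have h : Complex.I / (2 * (ℏ:ℂ)) *
      (((x.1 - m.1) * (m.2 - y.2) - (x.2 - m.2) * (m.1 - y.1) : ℝ) : ℂ)
      = (((((x.1 - m.1) * (m.2 - y.2) - (x.2 - m.2) * (m.1 - y.1)) / (2 * ℏ)) : ℝ) : ℂ)
        * Complex.I := by
    push_cast; ring
  rw [h]
  rw [Complex.norm_exp_ofReal_mul_I]

lemma kernel_translate (hℏ : 0 < ℏ) (m u v : ℝ × ℝ) :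
    moyalKernel ℏ m (m + u) (m + v) = (Real.fourierChar (-(Lb v (Wmap ℏ u))) : ℂ) := by
  rw [moyalKernel, Real.fourierChar_apply]
  have hpi : (Real.pi : ℂ) ≠ 0 := Complex.ofReal_ne_zero.mpr Real.pi_ne_zero
  have hh : (ℏ : ℂ) ≠ 0 := Complex.ofReal_ne_zero.mpr (ne_of_gt hℏ)
  congr 1
  simp only [Prod.fst_add, Prod.snd_add, Lb_apply, Wmap]
  push_cast
  field_simp
  ring

variable (f g : SchwartzMap (ℝ × ℝ) ℂ)

lemma integrand_integrable (m : ℝ × ℝ) :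
    Integrable (fun xy : (ℝ × ℝ) × (ℝ × ℝ) =>
      f xy.1 * g xy.2 * moyalKernel ℏ m xy.1 xy.2) := by
  have hb : Integrable (fun xy : (ℝ × ℝ) × (ℝ × ℝ) => ‖f xy.1‖ * ‖g xy.2‖) :=
    f.integrable.norm.mul_prod g.integrable.norm
  refine hb.mono' ?_ ?_
  · apply Continuous.aestronglyMeasurable
    have : Continuous fun xy : (ℝ × ℝ) × (ℝ × ℝ) => moyalKernel ℏ m xy.1 xy.2 := by
      unfold moyalKernel
      apply Complex.continuous_exp.comp
      fun_prop
    exact ((f.continuous.comp continuous_fst).mul (g.continuous.comp continuous_snd)).mul this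
  · filter_upwards with xy
    rw [norm_mul, norm_mul, kernel_norm, mul_one]

def F2 (ℏ : ℝ) (f g : SchwartzMap (ℝ × ℝ) ℂ) (m w : ℝ × ℝ) : ℂ :=
  f (m + Lmap ℏ w) * ((Real.fourierChar (Lb m w) : ℂ) * FT (⇑g) w)

instance : MeasureTheory.Measure.IsAddHaarMeasure (volume : Measure (ℝ × ℝ)) :=
  (inferInstance : MeasureTheory.Measure.IsAddHaarMeasure ((volume : Measure ℝ).prod volume))

instance : MeasureTheory.Measure.IsAddHaarMeasure (volume : Measure ((ℝ × ℝ) × (ℝ × ℝ))) :=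
  (inferInstance :
    MeasureTheory.Measure.IsAddHaarMeasure ((volume : Measure (ℝ × ℝ)).prod volume))

def Se : (ℝ × ℝ) ≃ᵐ (ℝ × ℝ) :=
  MeasurableEquiv.trans MeasurableEquiv.prodComm
    ((MeasurableEquiv.refl ℝ).prodCongr (MeasurableEquiv.neg ℝ))

lemma Se_apply : ⇑Se = fun w : ℝ × ℝ => ((w.2, -w.1) : ℝ × ℝ) := by
  funext w; rfl

lemma Se_mp : MeasurePreserving (fun w : ℝ × ℝ => ((w.2, -w.1) : ℝ × ℝ)) volume volume := by
  have h1 : MeasurePreserving (Prod.swap : ℝ × ℝ → ℝ × ℝ) volume volume :=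
    Measure.measurePreserving_swap
  have h2 : MeasurePreserving (Prod.map (id : ℝ → ℝ) (Neg.neg : ℝ → ℝ)) volume volume :=
    (MeasurePreserving.id volume).prod (Measure.measurePreserving_neg volume)
  exact h2.comp h1

lemma integrable_shift (hℏ : 0 < ℏ) (m : ℝ × ℝ) :
    Integrable (fun uv : (ℝ × ℝ) × (ℝ × ℝ) =>
      f (m + uv.1) * g (m + uv.2) * (Real.fourierChar (-(Lb uv.2 (Wmap ℏ uv.1))) : ℂ)) := by
  have h0 := integrand_integrable (ℏ := ℏ) f g m
  have h := ((measurePreserving_add_left (volume : Measure ((ℝ × ℝ) × (ℝ × ℝ)))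
      ((m, m))).integrable_comp h0.aestronglyMeasurable).2 h0
  refine h.congr (Filter.Eventually.of_forall fun uv => ?_)
  show f (m + uv.1) * g (m + uv.2) * moyalKernel ℏ m (m + uv.1) (m + uv.2) = _
  rw [kernel_translate hℏ]

lemma moyal_repr (hℏ : 0 < ℏ) (m : ℝ × ℝ) :
    moyal ℏ (⇑f) (⇑g) m = ∫ w : ℝ × ℝ, F2 ℏ f g m w := by
  have ha : (0:ℝ) < 4 * Real.pi * ℏ := by positivity
  have hA : (∫ xy : (ℝ × ℝ) × (ℝ × ℝ), f xy.1 * g xy.2 * moyalKernel ℏ m xy.1 xy.2)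
      = ∫ uv : (ℝ × ℝ) × (ℝ × ℝ),
          f (m + uv.1) * g (m + uv.2) * (Real.fourierChar (-(Lb uv.2 (Wmap ℏ uv.1))) : ℂ) := by
    rw [← integral_add_left_eq_self
      (fun xy : (ℝ × ℝ) × (ℝ × ℝ) => f xy.1 * g xy.2 * moyalKernel ℏ m xy.1 xy.2) ((m, m))]
    congr 1 with uv
    show f (m + uv.1) * g (m + uv.2) * moyalKernel ℏ m (m + uv.1) (m + uv.2) = _
    rw [kernel_translate hℏ]
  have hB : (∫ uv : (ℝ × ℝ) × (ℝ × ℝ),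
        f (m + uv.1) * g (m + uv.2) * (Real.fourierChar (-(Lb uv.2 (Wmap ℏ uv.1))) : ℂ))
      = ∫ u : ℝ × ℝ, ∫ v : ℝ × ℝ,
          f (m + u) * g (m + v) * (Real.fourierChar (-(Lb v (Wmap ℏ u))) : ℂ) :=
    MeasureTheory.integral_prod _ (integrable_shift f g hℏ m)
  have hC : ∀ u : ℝ × ℝ, (∫ v : ℝ × ℝ,
        f (m + u) * g (m + v) * (Real.fourierChar (-(Lb v (Wmap ℏ u))) : ℂ))
      = f (m + u) * ((Real.fourierChar (Lb m (Wmap ℏ u)) : ℂ) * FT (⇑g) (Wmap ℏ u)) := by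
    intro u
    have h1 : ∀ v : ℝ × ℝ, f (m + u) * g (m + v) * (Real.fourierChar (-(Lb v (Wmap ℏ u))) : ℂ)
        = f (m + u) * (Real.fourierChar (-(Lb v (Wmap ℏ u))) • ((⇑g ∘ (fun v => v + m)) v)) := by
      intro v
      simp only [Function.comp_apply, Circle.smul_def, smul_eq_mul]
      rw [add_comm v m]
      ring
    simp only [h1]
    rw [MeasureTheory.integral_const_mul]
    congr 1
    have h3 := VectorFourier.fourierIntegral_comp_add_right Real.fourierChar
      (volume : Measure (ℝ × ℝ)) Lb (⇑g) m
    have h4 := congrFun h3 (Wmap ℏ u)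
    rw [show (∫ v : ℝ × ℝ, Real.fourierChar (-(Lb v (Wmap ℏ u))) • ((⇑g ∘ (fun v => v + m)) v))
        = VectorFourier.fourierIntegral Real.fourierChar volume Lb
            (⇑g ∘ (fun v => v + m)) (Wmap ℏ u) from rfl, h4]
    rw [Circle.smul_def]
    rfl
  have hD : moyal ℏ (⇑f) (⇑g) m = ((4 * Real.pi * ℏ) ^ 2 : ℝ)⁻¹ •
      ∫ u : ℝ × ℝ, f (m + u) * ((Real.fourierChar (Lb m (Wmap ℏ u)) : ℂ)
        * FT (⇑g) (Wmap ℏ u)) := by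
    rw [moyal, hA, hB]
    congr 1
    exact integral_congr_ae (Filter.Eventually.of_forall fun u => hC u)
  -- substitution u = Lmap ℏ w
  set Φ : (ℝ × ℝ) → ℂ := fun u =>
    f (m + u) * ((Real.fourierChar (Lb m (Wmap ℏ u)) : ℂ) * FT (⇑g) (Wmap ℏ u)) with hΦ
  have hLm : ∀ w : ℝ × ℝ, Lmap ℏ w = (4 * Real.pi * ℏ) • ((w.2, -w.1) : ℝ × ℝ) := by
    intro w
    simp only [Lmap, Prod.smul_mk, smul_eq_mul]
    exact Prod.ext rfl (by ring)
  have hsub : (∫ w : ℝ × ℝ, Φ (Lmap ℏ w)) = |(((4 * Real.pi * ℏ) ^ 2)⁻¹ : ℝ)| • ∫ u, Φ u := by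
    calc (∫ w : ℝ × ℝ, Φ (Lmap ℏ w))
        = ∫ w : ℝ × ℝ, Φ ((4 * Real.pi * ℏ) • w) := by
          simp only [hLm]
          exact Se_mp.integral_comp (Se_apply ▸ Se.measurableEmbedding)
            (fun w => Φ ((4 * Real.pi * ℏ) • w))
      _ = |(((4 * Real.pi * ℏ) ^ (Module.finrank ℝ (ℝ × ℝ)))⁻¹ : ℝ)| • ∫ u, Φ u :=
          Measure.integral_comp_smul volume Φ (4 * Real.pi * ℏ)
      _ = |(((4 * Real.pi * ℏ) ^ 2)⁻¹ : ℝ)| • ∫ u, Φ u := by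
          norm_num [Module.finrank_prod, Module.finrank_self]
  have hc : ((4 * Real.pi * ℏ) ^ 2 : ℝ) ≠ 0 := by positivity
  have habs : |(((4 * Real.pi * ℏ) ^ 2)⁻¹ : ℝ)| = (((4 * Real.pi * ℏ) ^ 2)⁻¹ : ℝ) := by
    rw [abs_of_pos]; positivity
  have hΦw : ∀ w : ℝ × ℝ, Φ (Lmap ℏ w) = F2 ℏ f g m w := by
    intro w
    rw [hΦ]
    simp only [Wmap_Lmap hℏ w, F2]
  calc moyal ℏ (⇑f) (⇑g) m = ((4 * Real.pi * ℏ) ^ 2 : ℝ)⁻¹ • ∫ u, Φ u := hD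
    _ = ((4 * Real.pi * ℏ) ^ 2 : ℝ)⁻¹ • (((4 * Real.pi * ℏ) ^ 2 : ℝ) •
          ∫ w : ℝ × ℝ, Φ (Lmap ℏ w)) := by
        rw [hsub, habs, smul_smul, smul_smul]
        congr 1
        field_simp
    _ = ∫ w : ℝ × ℝ, Φ (Lmap ℏ w) := by
        rw [smul_smul, inv_mul_cancel₀ hc, one_smul]
    _ = ∫ w : ℝ × ℝ, F2 ℏ f g m w := by simp only [hΦw]

lemma F2_integrable (hℏ : 0 < ℏ) : Integrable (Function.uncurry (F2 ℏ f g)) volume := by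
  have hFT := FT_integrable g
  have hb0 : Integrable (fun p : (ℝ × ℝ) × (ℝ × ℝ) => ‖f p.1‖ * ‖FT (⇑g) p.2‖) :=
    f.integrable.norm.mul_prod hFT.norm
  have hσ : MeasurePreserving
      (fun p : (ℝ × ℝ) × (ℝ × ℝ) => ((p.1 + Lmap ℏ p.2, p.2) : (ℝ × ℝ) × (ℝ × ℝ)))
      volume volume := by
    have hτ : MeasurePreserving
        (fun p : (ℝ × ℝ) × (ℝ × ℝ) => ((p.1, p.2 + Lmap ℏ p.1) : (ℝ × ℝ) × (ℝ × ℝ)))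
        volume volume := by
      have hmeas : Measurable (Function.uncurry fun (a c : ℝ × ℝ) => c + Lmap ℏ a) := by
        apply Continuous.measurable
        show Continuous fun p : (ℝ × ℝ) × (ℝ × ℝ) => p.2 + Lmap ℏ p.1
        exact continuous_snd.add (Lmap_cont.comp continuous_fst)
      have hae : ∀ᵐ a ∂(volume : Measure (ℝ × ℝ)),
          Measure.map (fun c => c + Lmap ℏ a) volume = volume :=
        Filter.Eventually.of_forall fun a =>
          (measurePreserving_add_right volume (Lmap ℏ a)).map_eq
      exact MeasurePreserving.skew_product (f := (id : ℝ × ℝ → ℝ × ℝ))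
        (g := fun (a c : ℝ × ℝ) => c + Lmap ℏ a) (MeasurePreserving.id volume) hmeas hae
    have hswap : MeasurePreserving (Prod.swap : (ℝ × ℝ) × (ℝ × ℝ) → (ℝ × ℝ) × (ℝ × ℝ))
        volume volume := Measure.measurePreserving_swap
    exact (hswap.comp hτ).comp hswap
  have hbd : Integrable (fun p : (ℝ × ℝ) × (ℝ × ℝ) => ‖f (p.1 + Lmap ℏ p.2)‖ * ‖FT (⇑g) p.2‖) := by
    have := (hσ.integrable_comp hb0.aestronglyMeasurable).2 hb0
    exact this
  refine hbd.mono' ?_ ?_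
  · apply Continuous.aestronglyMeasurable
    show Continuous fun p : (ℝ × ℝ) × (ℝ × ℝ) =>
      f (p.1 + Lmap ℏ p.2) * ((Real.fourierChar (Lb p.1 p.2) : ℂ) * FT (⇑g) p.2)
    exact (f.continuous.comp (continuous_fst.add (Lmap_cont.comp continuous_snd))).mul
      ((charC_cont.comp Lb_cont).mul ((FT_continuous g).comp continuous_snd))
  · filter_upwards with p
    show ‖f (p.1 + Lmap ℏ p.2) * ((Real.fourierChar (Lb p.1 p.2) : ℂ) * FT (⇑g) p.2)‖ ≤ _
    rw [norm_mul, norm_mul, charC_norm, one_mul]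

lemma moyal_integrable (hℏ : 0 < ℏ) : Integrable (moyal ℏ (⇑f) (⇑g)) := by
  have h := (F2_integrable f g hℏ).integral_prod_left
  exact h.congr (Filter.Eventually.of_forall fun m => (moyal_repr f g hℏ m).symm)

lemma Jw (hℏ : 0 < ℏ) (w : ℝ × ℝ) :
    (∫ m : ℝ × ℝ, F2 ℏ f g m w) = FT (⇑f) (-w) * FT (⇑g) w := by
  have h1 : ∀ m : ℝ × ℝ, F2 ℏ f g m w
      = (f (m + Lmap ℏ w) * (Real.fourierChar (Lb m w) : ℂ)) * FT (⇑g) w := by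
    intro m; rw [F2]; ring
  simp only [h1]
  rw [MeasureTheory.integral_mul_const]
  congr 1
  have h2 : ∀ m : ℝ × ℝ, f (m + Lmap ℏ w) * (Real.fourierChar (Lb m w) : ℂ)
      = (fun m => f m * (Real.fourierChar (Lb (m - Lmap ℏ w) w) : ℂ)) (m + Lmap ℏ w) := by
    intro m; simp [add_sub_cancel_right]
  simp only [h2]
  rw [integral_add_right_eq_self
    (fun m => f m * (Real.fourierChar (Lb (m - Lmap ℏ w) w) : ℂ)) (Lmap ℏ w)]
  have h3 : ∀ m : ℝ × ℝ, Lb (m - Lmap ℏ w) w = Lb m w := by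
    intro m
    rw [map_sub, LinearMap.sub_apply, Lb_Lmap, sub_zero]
  have h4 : FT (⇑f) (-w) = ∫ m : ℝ × ℝ, (Real.fourierChar (Lb m w) : ℂ) * f m := by
    rw [FT, VectorFourier.fourierIntegral]
    congr 1 with m
    rw [show -(Lb m (-w)) = Lb m w by rw [map_neg, neg_neg]]
    simp only [Circle.smul_def, smul_eq_mul]
  simp only [h3]
  rw [h4]
  congr 1 with m
  ring

end MoyalAux

/-- The trace property of the Moyal product:
`∫ (f ⋆_ℏ g) = ∫ f·g`, both integrals being absolutely convergent. -/
theorem moyal_trace (ℏ : ℝ) (hℏ : 0 < ℏ) (f g : SchwartzMap (ℝ × ℝ) ℂ) :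
    Integrable (moyal ℏ (⇑f) (⇑g)) ∧
    Integrable (fun m : ℝ × ℝ => f m * g m) ∧
    (∫ m : ℝ × ℝ, moyal ℏ (⇑f) (⇑g) m) = ∫ m : ℝ × ℝ, f m * g m := by
  refine ⟨moyal_integrable f g hℏ, ?_, ?_⟩
  · refine (fun ⟨c, hc⟩ => g.integrable.bdd_mul f.continuous.aestronglyMeasurable (c := c)
      (Filter.Eventually.of_forall hc) : (∃ c, ∀ x, ‖f x‖ ≤ c) → _) ?_
    obtain ⟨C, hCpos, hC⟩ := f.decay 0 0
    refine ⟨C, fun x => ?_⟩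
    have := hC x
    simpa using this
  · calc (∫ m : ℝ × ℝ, moyal ℏ (⇑f) (⇑g) m)
        = ∫ m : ℝ × ℝ, ∫ w : ℝ × ℝ, F2 ℏ f g m w :=
          integral_congr_ae (Filter.Eventually.of_forall fun m => moyal_repr f g hℏ m)
      _ = ∫ w : ℝ × ℝ, ∫ m : ℝ × ℝ, F2 ℏ f g m w :=
          integral_integral_swap (F2_integrable f g hℏ)
      _ = ∫ w : ℝ × ℝ, FT (⇑f) (-w) * FT (⇑g) w :=
          integral_congr_ae (Filter.Eventually.of_forall fun w => Jw f g hℏ w)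
      _ = ∫ m : ℝ × ℝ, f m * g m := key f g
end

section
/- For all Schwartz functions f, g : ℝ² → ℂ and every point (p,q) ∈ ℝ², the Moyal product converges pointwise to the pointwise product in the semiclassical limit: lim_{ℏ → 0⁺} (f ⋆_ℏ g)(p,q) = f(p,q) · g(p,q). -/
open MeasureTheory Complex Filter

open scoped FourierTransform RealInnerProductSpace


noncomputable def eqE : EuclideanSpace ℝ (Fin 2) ≃ᵐ (ℝ × ℝ) :=
  (MeasurableEquiv.toLp 2 (Fin 2 → ℝ)).symm.trans MeasurableEquiv.finTwoArrow

lemma eqE_mp : MeasurePreserving eqE volume volume :=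
  (volume_preserving_finTwoArrow ℝ).comp (EuclideanSpace.volume_preserving_symm_measurableEquiv_toLp (Fin 2))

noncomputable def Teq : EuclideanSpace ℝ (Fin 2) ≃L[ℝ] (ℝ × ℝ) :=
  (EuclideanSpace.equiv (Fin 2) ℝ).trans
    { LinearEquiv.finTwoArrow ℝ ℝ with
      continuous_toFun := (continuous_apply 0).prodMk (continuous_apply 1)
      continuous_invFun := continuous_pi fun i => by
        fin_cases i
        · exact continuous_fst
        · exact continuous_snd }

noncomputable def G₀ (g : SchwartzMap (ℝ × ℝ) ℂ) : SchwartzMap (EuclideanSpace ℝ (Fin 2)) ℂ :=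
  SchwartzMap.compCLMOfContinuousLinearEquiv ℝ Teq g

lemma inner_symm_eq (v ξ : ℝ × ℝ) : ⟪eqE.symm v, eqE.symm ξ⟫ = v.1 * ξ.1 + v.2 * ξ.2 := by
  simp [PiLp.inner_apply, RCLike.inner_apply, Fin.sum_univ_two]
  rw [mul_comm ((eqE.symm ξ).ofLp 0), mul_comm ((eqE.symm ξ).ofLp 1)]
  rfl

lemma Fg_eq (g : SchwartzMap (ℝ × ℝ) ℂ) (ξ : ℝ × ℝ) :
    𝓕 (⇑(G₀ g)) (eqE.symm ξ) =
      ∫ v : ℝ × ℝ, Complex.exp ((((-2) * Real.pi * (v.1 * ξ.1 + v.2 * ξ.2) : ℝ) : ℂ) * Complex.I) * g v := by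
  rw [Real.fourier_eq']
  rw [← (eqE_mp.symm eqE).integral_comp'
    (fun w => Complex.exp ((((-2) * Real.pi * ⟪w, eqE.symm ξ⟫ : ℝ) : ℂ) * Complex.I) • (G₀ g) w)]
  congr 1
  ext v
  rw [inner_symm_eq, smul_eq_mul,
    show (G₀ g) (eqE.symm v) = g v from congrArg g (eqE.apply_symm_apply v)]

lemma integral_char_Fg (g : SchwartzMap (ℝ × ℝ) ℂ) (m : ℝ × ℝ) :
    (∫ ξ : ℝ × ℝ, Complex.exp (((2 * Real.pi * (m.1 * ξ.1 + m.2 * ξ.2) : ℝ) : ℂ) * Complex.I) *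
      𝓕 (⇑(G₀ g)) (eqE.symm ξ)) = g m := by
  rw [← eqE_mp.integral_comp'
    (fun ξ => Complex.exp (((2 * Real.pi * (m.1 * ξ.1 + m.2 * ξ.2) : ℝ) : ℂ) * Complex.I) *
      𝓕 (⇑(G₀ g)) (eqE.symm ξ))]
  have h1 : ∀ w : EuclideanSpace ℝ (Fin 2),
      (Complex.exp (((2 * Real.pi * (m.1 * (eqE w).1 + m.2 * (eqE w).2) : ℝ) : ℂ) * Complex.I) *
        𝓕 (⇑(G₀ g)) (eqE.symm (eqE w)))
      = Complex.exp (((2 * Real.pi * ⟪w, eqE.symm m⟫ : ℝ) : ℂ) * Complex.I) • 𝓕 (⇑(G₀ g)) w := by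
    intro w
    rw [eqE.symm_apply_apply, smul_eq_mul]
    congr 3
    have : ⟪w, eqE.symm m⟫ = (eqE w).1 * m.1 + (eqE w).2 * m.2 := by
      rw [← inner_symm_eq (eqE w) m, eqE.symm_apply_apply]
    rw [this]; push_cast; ring
  simp_rw [h1]
  rw [← Real.fourierInv_eq']
  have hinv := Continuous.fourierInv_fourier_eq (f := ⇑(G₀ g)) (G₀ g).continuous (G₀ g).integrable
    (by
      have : 𝓕 ⇑(G₀ g) = ⇑(SchwartzMap.fourierTransformCLM ℝ (G₀ g)) := by
        rw [SchwartzMap.fourierTransformCLM_apply, SchwartzMap.fourier_coe]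
      rw [this]; exact (SchwartzMap.fourierTransformCLM ℝ (G₀ g)).integrable)
  rw [congrFun hinv (eqE.symm m)]
  exact congrArg g (eqE.apply_symm_apply m)

lemma moyalKernel_eq (ℏ : ℝ) (m x y : ℝ × ℝ) :
    moyalKernel ℏ m x y = Complex.exp
      (((((x.1 - m.1) * (m.2 - y.2) - (x.2 - m.2) * (m.1 - y.1)) / (2 * ℏ) : ℝ) : ℂ) * Complex.I) := by
  unfold moyalKernel
  congr 1
  push_cast
  ring

lemma norm_moyalKernel (ℏ : ℝ) (m x y : ℝ × ℝ) : ‖moyalKernel ℏ m x y‖ = 1 := by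
  rw [moyalKernel_eq, Complex.norm_exp_ofReal_mul_I]

lemma continuous_moyalKernel (ℏ : ℝ) (m : ℝ × ℝ) :
    Continuous (fun z : (ℝ × ℝ) × (ℝ × ℝ) => moyalKernel ℏ m z.1 z.2) := by
  unfold moyalKernel
  fun_prop

lemma moyal_integrable_s3 (f g : SchwartzMap (ℝ × ℝ) ℂ) (ℏ : ℝ) (m : ℝ × ℝ) :
    Integrable (fun z : (ℝ × ℝ) × (ℝ × ℝ) => f z.1 * g z.2 * moyalKernel ℏ m z.1 z.2)
      (volume.prod volume) := by
  apply ((f.integrable (μ := volume)).mul_prod (g.integrable (μ := volume))).norm.mono'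
  · exact (((f.continuous.comp continuous_fst).mul
      (g.continuous.comp continuous_snd)).mul (continuous_moyalKernel ℏ m)).aestronglyMeasurable
  · filter_upwards with z
    rw [norm_mul, norm_moyalKernel, mul_one]

lemma inner_int (g : SchwartzMap (ℝ × ℝ) ℂ) {ℏ : ℝ} (hℏ : 0 < ℏ) (m x : ℝ × ℝ) :
    ∫ y : ℝ × ℝ, g y * moyalKernel ℏ m x y
    = Complex.exp (((((x.1 - m.1) * m.2 - (x.2 - m.2) * m.1) / (2 * ℏ) : ℝ) : ℂ) * Complex.I) *
      𝓕 ⇑(G₀ g) (eqE.symm (-(x.2 - m.2) / (4 * Real.pi * ℏ), (x.1 - m.1) / (4 * Real.pi * ℏ))) := by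
  rw [Fg_eq, ← integral_const_mul]
  congr 1
  funext y
  rw [moyalKernel_eq, ← mul_assoc, ← Complex.exp_add, mul_comm (g y), ← add_mul,
    ← Complex.ofReal_add]
  congr 3
  have h2 : (ℏ : ℂ) ≠ 0 := Complex.ofReal_ne_zero.2 hℏ.ne'
  have h4 : (Real.pi : ℂ) ≠ 0 := Complex.ofReal_ne_zero.2 Real.pi_ne_zero
  push_cast
  field_simp
  ring

noncomputable def Jme : (ℝ × ℝ) ≃ᵐ (ℝ × ℝ) :=
  MeasurableEquiv.prodComm.trans
    ((MeasurableEquiv.refl ℝ).prodCongr (Homeomorph.neg ℝ).toMeasurableEquiv)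

example (s : ℝ × ℝ) : Jme s = (s.2, -s.1) := rfl

lemma Jme_mp : MeasurePreserving (⇑Jme) (volume : Measure (ℝ × ℝ)) volume := by
  have h1 : MeasurePreserving (Prod.swap : ℝ × ℝ → ℝ × ℝ)
      ((volume : Measure ℝ).prod volume) ((volume : Measure ℝ).prod volume) :=
    Measure.measurePreserving_swap
  have h2 : MeasurePreserving (Prod.map (id : ℝ → ℝ) (Neg.neg : ℝ → ℝ))
      ((volume : Measure ℝ).prod volume) ((volume : Measure ℝ).prod volume) :=
    (MeasurePreserving.id volume).prod (Measure.measurePreserving_neg volume)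
  exact (h2.comp h1 : _)

lemma finrank_R2 : Module.finrank ℝ (ℝ × ℝ) = 2 := by
  simp [Module.finrank_prod]

lemma moyal_repr_s3 (f g : SchwartzMap (ℝ × ℝ) ℂ) {ℏ : ℝ} (hℏ : 0 < ℏ) (m : ℝ × ℝ) :
    moyal ℏ (⇑f) (⇑g) m = ∫ s : ℝ × ℝ,
      f (m + (4 * Real.pi * ℏ) • ((s.2, -s.1) : ℝ × ℝ)) *
        (Complex.exp (((2 * Real.pi * (m.1 * s.1 + m.2 * s.2) : ℝ) : ℂ) * Complex.I) *
          𝓕 ⇑(G₀ g) (eqE.symm s)) := by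
  have hR : (0 : ℝ) < 4 * Real.pi * ℏ := by positivity
  set R := 4 * Real.pi * ℏ with hRdef
  -- the integrand as a function of the original variable x
  set Φ : ℝ × ℝ → ℂ := fun x =>
    f x * (Complex.exp (((((x.1 - m.1) * m.2 - (x.2 - m.2) * m.1) / (2 * ℏ) : ℝ) : ℂ) *
      Complex.I) *
      𝓕 ⇑(G₀ g) (eqE.symm (-(x.2 - m.2) / (4 * Real.pi * ℏ), (x.1 - m.1) / (4 * Real.pi * ℏ))))
    with hΦ
  have step1 : moyal ℏ (⇑f) (⇑g) m = (R ^ 2 : ℝ)⁻¹ • ∫ x, Φ x := by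
    unfold moyal
    rw [show (volume : Measure ((ℝ × ℝ) × (ℝ × ℝ))) = (volume : Measure (ℝ × ℝ)).prod volume from
      rfl]
    rw [integral_prod _ (moyal_integrable_s3 f g ℏ m)]
    simp_rw [mul_assoc, integral_const_mul, inner_int g hℏ m]
    congr 1
    rw [hRdef]
    ring
  -- pointwise identification of the target integrand
  have hpt : ∀ s : ℝ × ℝ,
      f (m + R • ((s.2, -s.1) : ℝ × ℝ)) *
        (Complex.exp (((2 * Real.pi * (m.1 * s.1 + m.2 * s.2) : ℝ) : ℂ) * Complex.I) *
          𝓕 ⇑(G₀ g) (eqE.symm s)) = Φ (m + R • (Jme s)) := by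
    intro s
    have hs : m + R • (Jme s) = (m.1 + R * s.2, m.2 + R * (-s.1)) := rfl
    rw [hΦ]
    simp only [hs]
    have e1 : (m.1 + R * s.2 - m.1) * m.2 - (m.2 + R * (-s.1) - m.2) * m.1 =
        R * (s.2 * m.2 + s.1 * m.1) := by ring
    have e2 : ((m.1 + R * s.2 - m.1) * m.2 - (m.2 + R * (-s.1) - m.2) * m.1) / (2 * ℏ)
        = 2 * Real.pi * (m.1 * s.1 + m.2 * s.2) := by
      rw [e1, hRdef]
      field_simp
      ring
    have e3 : (-(m.2 + R * (-s.1) - m.2) / (4 * Real.pi * ℏ),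
        (m.1 + R * s.2 - m.1) / (4 * Real.pi * ℏ)) = s := by
      rw [hRdef]
      have : (4 * Real.pi * ℏ) ≠ 0 := hR.ne'
      ext <;> field_simp <;> ring
    rw [e2, e3]
    rfl
  rw [step1]
  have step2 : ∫ s : ℝ × ℝ, Φ (m + R • (Jme s)) = ∫ s : ℝ × ℝ, Φ (m + R • s) :=
    Jme_mp.integral_comp' (fun s => Φ (m + R • s))
  have step3 : ∫ s : ℝ × ℝ, Φ (m + R • s) = |((R ^ Module.finrank ℝ (ℝ × ℝ)) : ℝ)⁻¹| •
      ∫ u, Φ (m + u) :=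
    Measure.integral_comp_smul volume (fun u => Φ (m + u)) R
  have step4 : ∫ u, Φ (m + u) = ∫ x, Φ x := integral_add_left_eq_self Φ m
  simp_rw [hpt]
  rw [step2, step3, step4, finrank_R2]
  rw [abs_of_pos (show (0:ℝ) < (R ^ 2)⁻¹ by positivity)]

lemma eqE_symm_continuous : Continuous (⇑eqE.symm : ℝ × ℝ → EuclideanSpace ℝ (Fin 2)) :=
  Teq.symm.continuous

lemma Fg_continuous (g : SchwartzMap (ℝ × ℝ) ℂ) :
    Continuous (fun s : ℝ × ℝ => 𝓕 ⇑(G₀ g) (eqE.symm s)) := by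
  have h : Continuous (𝓕 ⇑(G₀ g)) := by
    rw [show 𝓕 ⇑(G₀ g) = ⇑(SchwartzMap.fourierTransformCLM ℝ (G₀ g)) from rfl]
    exact (SchwartzMap.fourierTransformCLM ℝ (G₀ g)).continuous
  exact h.comp eqE_symm_continuous

lemma Fg_integrable (g : SchwartzMap (ℝ × ℝ) ℂ) :
    Integrable (fun s : ℝ × ℝ => 𝓕 ⇑(G₀ g) (eqE.symm s)) volume := by
  have h : Integrable (𝓕 ⇑(G₀ g)) volume := by
    rw [show 𝓕 ⇑(G₀ g) = ⇑(SchwartzMap.fourierTransformCLM ℝ (G₀ g)) from rfl]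
    exact (SchwartzMap.fourierTransformCLM ℝ (G₀ g)).integrable
  exact ((eqE_mp.symm eqE).integrable_comp_emb eqE.symm.measurableEmbedding).2 h

/-- Pointwise semiclassical limit of the Moyal product:
`lim_{ℏ → 0⁺} (f ⋆_ℏ g)(p,q) = f(p,q)·g(p,q)`. -/
theorem moyal_semiclassical_limit (f g : SchwartzMap (ℝ × ℝ) ℂ) (m : ℝ × ℝ) :
    Tendsto (fun ℏ : ℝ => moyal ℏ (⇑f) (⇑g) m) (nhdsWithin 0 (Set.Ioi 0))
      (nhds (f m * g m)) := by
  set Fg : ℝ × ℝ → ℂ := fun s => 𝓕 ⇑(G₀ g) (eqE.symm s) with hFg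
  set χ : ℝ × ℝ → ℂ := fun s =>
    Complex.exp (((2 * Real.pi * (m.1 * s.1 + m.2 * s.2) : ℝ) : ℂ) * Complex.I) with hχ
  set F : ℝ → ℝ × ℝ → ℂ := fun ℏ s =>
    f (m + (4 * Real.pi * ℏ) • ((s.2, -s.1) : ℝ × ℝ)) * (χ s * Fg s) with hF
  set Cf : ℝ := SchwartzMap.seminorm ℝ 0 0 f with hCf
  have hχnorm : ∀ s, ‖χ s‖ = 1 := fun s => by
    rw [hχ, Complex.norm_exp_ofReal_mul_I]
  have hχcont : Continuous χ := by
    apply Complex.continuous_exp.comp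
    fun_prop
  have htend : Tendsto (fun ℏ : ℝ => ∫ s : ℝ × ℝ, F ℏ s) (nhdsWithin 0 (Set.Ioi 0))
      (nhds (∫ s : ℝ × ℝ, f m * (χ s * Fg s))) := by
    apply tendsto_integral_filter_of_dominated_convergence
      (bound := fun s => Cf * ‖Fg s‖)
    · filter_upwards with ℏ
      have hc : Continuous (F ℏ) := by
        apply Continuous.mul
        · apply f.continuous.comp
          fun_prop
        · exact hχcont.mul (Fg_continuous g)
      exact hc.aestronglyMeasurable
    · filter_upwards with ℏ
      filter_upwards with s
      rw [hF]
      simp only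
      rw [norm_mul, norm_mul, hχnorm, one_mul]
      gcongr
      exact SchwartzMap.norm_le_seminorm ℝ f _
    · exact (Fg_integrable g).norm.const_mul Cf
    · filter_upwards with s
      have h0 : Tendsto (fun ℏ : ℝ => m + (4 * Real.pi * ℏ) • ((s.2, -s.1) : ℝ × ℝ))
          (nhdsWithin 0 (Set.Ioi 0)) (nhds m) := by
        have hcont : Continuous (fun ℏ : ℝ => m + (4 * Real.pi * ℏ) • ((s.2, -s.1) : ℝ × ℝ)) := by
          fun_prop
        have h1 := (hcont.tendsto 0).mono_left
          (nhdsWithin_le_nhds (s := Set.Ioi (0 : ℝ)))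
        simpa using h1
      exact ((f.continuous.tendsto m).comp h0).mul_const (χ s * Fg s)
  have hval : (∫ s : ℝ × ℝ, f m * (χ s * Fg s)) = f m * g m := by
    rw [integral_const_mul, hχ, hFg]
    simp only
    rw [integral_char_Fg g m]
  rw [hval] at htend
  apply htend.congr'
  filter_upwards [self_mem_nhdsWithin] with ℏ hℏ
  exact (moyal_repr_s3 f g hℏ m).symm
end
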